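/- Let D be a digraph with at least one arc. Then the following are equivalent: (i) every L-class and every R-class of ⟨D⟩ contains at most one idempotent; (ii) ⟨D⟩ is J-trivial; (iii) D is acyclic and every vertex of D has out-degree at most 1. -/

import Mathlib

/-- The transformation of `{1,…,n}` sending `a` to `b` and fixing all other points. -/
def arcT {n : ℕ} (a b : Fin n) : Fin n → Fin n := fun v => if v = a then b else v

/-- The semigroup `⟨D⟩` generated by the arcs of the digraph `D`; transformations act on
the right, so a product `ε₁ε₂⋯ε_k` is the function `ε_k ∘ ⋯ ∘ ε₁`. -/
def genSg {n : ℕ} (D : Set (Fin n × Fin n)) : Set (Fin n → Fin n) :=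
  { α | ∃ l : List (Fin n × Fin n), l ≠ [] ∧ (∀ p ∈ l, p ∈ D) ∧
      α = l.foldl (fun f p => arcT p.1 p.2 ∘ f) id }

/-- The product `x·y` in the right-action convention: apply `x` first, then `y`. -/
def sgMul {n : ℕ} (x y : Fin n → Fin n) : Fin n → Fin n := y ∘ x

/-- The right ideal `xS¹ = {x} ∪ xS`. -/
def rIdeal {n : ℕ} (S : Set (Fin n → Fin n)) (x : Fin n → Fin n) : Set (Fin n → Fin n) :=
  insert x { y | ∃ s ∈ S, y = sgMul x s }

/-- The left ideal `S¹x = {x} ∪ Sx`. -/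
def lIdeal {n : ℕ} (S : Set (Fin n → Fin n)) (x : Fin n → Fin n) : Set (Fin n → Fin n) :=
  insert x { y | ∃ s ∈ S, y = sgMul s x }

/-- The two-sided ideal `S¹xS¹`. -/
def jIdeal {n : ℕ} (S : Set (Fin n → Fin n)) (x : Fin n → Fin n) : Set (Fin n → Fin n) :=
  { y | ∃ s ∈ insert id S, ∃ t ∈ insert id S, y = sgMul s (sgMul x t) }

def RRel {n : ℕ} (S : Set (Fin n → Fin n)) (x y : Fin n → Fin n) : Prop :=
  rIdeal S x = rIdeal S y

def LRel {n : ℕ} (S : Set (Fin n → Fin n)) (x y : Fin n → Fin n) : Prop :=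
  lIdeal S x = lIdeal S y

def JRel {n : ℕ} (S : Set (Fin n → Fin n)) (x y : Fin n → Fin n) : Prop :=
  jIdeal S x = jIdeal S y

def RTrivial {n : ℕ} (S : Set (Fin n → Fin n)) : Prop :=
  ∀ x ∈ S, ∀ y ∈ S, RRel S x y → x = y

def LTrivial {n : ℕ} (S : Set (Fin n → Fin n)) : Prop :=
  ∀ x ∈ S, ∀ y ∈ S, LRel S x y → x = y

def HTrivial {n : ℕ} (S : Set (Fin n → Fin n)) : Prop :=
  ∀ x ∈ S, ∀ y ∈ S, RRel S x y → LRel S x y → x = y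

def JTrivial {n : ℕ} (S : Set (Fin n → Fin n)) : Prop :=
  ∀ x ∈ S, ∀ y ∈ S, JRel S x y → x = y

/-- `α` has a cycle of length `k`: `k` distinct points `a₀,…,a_{k-1}` with
`α(aᵢ) = a_{i+1 mod k}`. -/
def IsCycleOf {n : ℕ} (α : Fin n → Fin n) (k : ℕ) : Prop :=
  0 < k ∧ ∃ a : ZMod k → Fin n, Function.Injective a ∧ ∀ i, α (a i) = a (i + 1)

/-- `l(D)`: the maximal length of a cycle of an element of `⟨D⟩`. -/
noncomputable def lD {n : ℕ} (D : Set (Fin n × Fin n)) : ℕ :=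
  sSup { k | ∃ α ∈ genSg D, IsCycleOf α k }

/-- The arc set of a graph. -/
def arcsOf {n : ℕ} (G : SimpleGraph (Fin n)) : Set (Fin n × Fin n) :=
  { p | G.Adj p.1 p.2 }

/-- `l(G)` for a graph `G`. -/
noncomputable def lG {n : ℕ} (G : SimpleGraph (Fin n)) : ℕ := lD (arcsOf G)

/-- Reachability along directed walks of `D`. -/
def dreach {n : ℕ} (D : Set (Fin n × Fin n)) : Fin n → Fin n → Prop :=
  Relation.ReflTransGen (fun a b => (a, b) ∈ D)

/-- The strong component of the vertex `v`. -/
def strongComp {n : ℕ} (D : Set (Fin n × Fin n)) (v : Fin n) : Set (Fin n) :=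
  { u | dreach D u v ∧ dreach D v u }

/-- The underlying graph of the digraph `D`. -/
def underlying {n : ℕ} (D : Set (Fin n × Fin n)) : SimpleGraph (Fin n) where
  Adj a b := a ≠ b ∧ ((a, b) ∈ D ∨ (b, a) ∈ D)
  symm := ⟨fun a b h => ⟨h.1.symm, h.2.symm⟩⟩
  loopless := ⟨fun a h => h.1 rfl⟩

/-- `v 0, v 1, …, v r` is a cycle of the digraph `D`. -/
def IsDCycle {n : ℕ} (D : Set (Fin n × Fin n)) (r : ℕ) (v : ℕ → Fin n) : Prop :=
  1 ≤ r ∧ v r = v 0 ∧ (∀ i < r, ∀ j < r, v i = v j → i = j) ∧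
    ∀ i < r, (v i, v (i + 1)) ∈ D

def HasDCycle {n : ℕ} (D : Set (Fin n × Fin n)) : Prop := ∃ r v, IsDCycle D r v

def DAcyclic {n : ℕ} (D : Set (Fin n × Fin n)) : Prop := ¬ HasDCycle D

/-- `G` is a subgroup contained in the transformation semigroup `S`. -/
def IsSubgroupIn {n : ℕ} (S G : Set (Fin n → Fin n)) : Prop :=
  G ⊆ S ∧ (∀ x ∈ G, ∀ y ∈ G, sgMul x y ∈ G) ∧
    ∃ e ∈ G, (∀ x ∈ G, sgMul e x = x ∧ sgMul x e = x) ∧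
      ∀ x ∈ G, ∃ y ∈ G, sgMul x y = e ∧ sgMul y x = e

/-- Every subgroup of `S` is trivial. -/
def SgAperiodic {n : ℕ} (S : Set (Fin n → Fin n)) : Prop :=
  ∀ G, IsSubgroupIn S G → G.Subsingleton


section aux
variable {n : ℕ}

lemma foldl_arc_eq (l : List (Fin n × Fin n)) (g : Fin n → Fin n) :
    l.foldl (fun f p => arcT p.1 p.2 ∘ f) g
      = (l.foldl (fun f p => arcT p.1 p.2 ∘ f) id) ∘ g := by
  induction l generalizing g with
  | nil => rfl
  | cons p l ih =>
    simp only [List.foldl_cons]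
    rw [ih (arcT p.1 p.2 ∘ g), ih (arcT p.1 p.2 ∘ id)]
    rfl

lemma genSg_mul {D : Set (Fin n × Fin n)} {x y : Fin n → Fin n}
    (hx : x ∈ genSg D) (hy : y ∈ genSg D) : sgMul x y ∈ genSg D := by
  obtain ⟨l1, hl1ne, hl1, rfl⟩ := hx
  obtain ⟨l2, hl2ne, hl2, rfl⟩ := hy
  refine ⟨l1 ++ l2, by simp [hl1ne], ?_, ?_⟩
  · intro p hp; rcases List.mem_append.1 hp with h | h
    exacts [hl1 p h, hl2 p h]
  · rw [List.foldl_append, foldl_arc_eq l2 (List.foldl (fun f p => arcT p.1 p.2 ∘ f) id l1)]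
    rfl

variable {S : Set (Fin n → Fin n)}

lemma lIdeal_sub (hcl : ∀ a ∈ S, ∀ b ∈ S, sgMul a b ∈ S) {s x y : Fin n → Fin n}
    (hs : s ∈ S) (hx : x = sgMul s y) : lIdeal S x ⊆ lIdeal S y := by
  intro z hz
  rcases hz with rfl | ⟨a, ha, rfl⟩
  · exact Or.inr ⟨s, hs, hx⟩
  · exact Or.inr ⟨sgMul a s, hcl a ha s hs, by rw [hx]; rfl⟩

lemma rIdeal_sub (hcl : ∀ a ∈ S, ∀ b ∈ S, sgMul a b ∈ S) {t x y : Fin n → Fin n}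
    (ht : t ∈ S) (hx : x = sgMul y t) : rIdeal S x ⊆ rIdeal S y := by
  intro z hz
  rcases hz with rfl | ⟨a, ha, rfl⟩
  · exact Or.inr ⟨t, ht, hx⟩
  · exact Or.inr ⟨sgMul t a, hcl t ht a ha, by rw [hx]; rfl⟩

lemma jIdeal_sub_left (hcl : ∀ a ∈ S, ∀ b ∈ S, sgMul a b ∈ S) {s x y : Fin n → Fin n}
    (hs : s ∈ S) (hx : x = sgMul s y) : jIdeal S x ⊆ jIdeal S y := by
  rintro z ⟨a, ha, t, ht, rfl⟩
  refine ⟨sgMul a s, ?_, t, ht, by rw [hx]; rfl⟩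
  rcases ha with rfl | ha
  · exact Or.inr hs
  · exact Or.inr (hcl a ha s hs)

lemma jIdeal_sub_right (hcl : ∀ a ∈ S, ∀ b ∈ S, sgMul a b ∈ S) {t x y : Fin n → Fin n}
    (ht : t ∈ S) (hx : x = sgMul y t) : jIdeal S x ⊆ jIdeal S y := by
  rintro z ⟨a, ha, u, hu, rfl⟩
  refine ⟨a, ha, sgMul t u, ?_, by rw [hx]; rfl⟩
  rcases hu with rfl | hu
  · exact Or.inr ht
  · exact Or.inr (hcl t ht u hu)

lemma mem_jIdeal_self (x : Fin n → Fin n) : x ∈ jIdeal S x :=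
  ⟨id, Or.inl rfl, id, Or.inl rfl, rfl⟩

lemma lrel_jrel (hcl : ∀ a ∈ S, ∀ b ∈ S, sgMul a b ∈ S) {x y : Fin n → Fin n}
    (h : LRel S x y) : JRel S x y := by
  have hxy : x ∈ lIdeal S y := by rw [← h]; exact Or.inl rfl
  have hyx : y ∈ lIdeal S x := by rw [h]; exact Or.inl rfl
  rcases hxy with rfl | ⟨s, hs, hsx⟩
  · rfl
  rcases hyx with rfl | ⟨s', hs', hsy⟩
  · rfl
  exact Set.Subset.antisymm (jIdeal_sub_left hcl hs hsx) (jIdeal_sub_left hcl hs' hsy)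

lemma rrel_jrel (hcl : ∀ a ∈ S, ∀ b ∈ S, sgMul a b ∈ S) {x y : Fin n → Fin n}
    (h : RRel S x y) : JRel S x y := by
  have hxy : x ∈ rIdeal S y := by rw [← h]; exact Or.inl rfl
  have hyx : y ∈ rIdeal S x := by rw [h]; exact Or.inl rfl
  rcases hxy with rfl | ⟨s, hs, hsx⟩
  · rfl
  rcases hyx with rfl | ⟨s', hs', hsy⟩
  · rfl
  exact Set.Subset.antisymm (jIdeal_sub_right hcl hs hsx) (jIdeal_sub_right hcl hs' hsy)

end aux

section order
variable {n : ℕ} {D : Set (Fin n × Fin n)}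

lemma walk_of_dreach {a b : Fin n} (h : dreach D a b) :
    ∃ m, ∃ v : ℕ → Fin n, v 0 = a ∧ v m = b ∧ ∀ i < m, (v i, v (i + 1)) ∈ D := by
  induction h with
  | refl => exact ⟨0, fun _ => a, rfl, rfl, by omega⟩
  | @tail c d _ hcd ih =>
    obtain ⟨m, v, h0, hm, harc⟩ := ih
    refine ⟨m + 1, fun k => if k ≤ m then v k else d, by simp [h0], by simp, ?_⟩
    intro i hi
    rcases Nat.lt_or_ge i m with h | h
    · simp only [if_pos (by omega : i ≤ m), if_pos (by omega : i + 1 ≤ m)]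
      exact harc i h
    · have him : i = m := by omega
      subst him
      simp only [if_pos le_rfl, if_neg (by omega : ¬ i + 1 ≤ i), hm]
      exact hcd

lemma cycle_of_closed :
    ∀ r, 1 ≤ r → ∀ v : ℕ → Fin n, v r = v 0 → (∀ i < r, (v i, v (i + 1)) ∈ D) →
      HasDCycle D := by
  intro r
  induction r using Nat.strong_induction_on with
  | _ r ih =>
  intro hr v hc harc
  by_cases hd : ∀ i < r, ∀ j < r, v i = v j → i = j
  · exact ⟨r, v, hr, hc, hd, harc⟩
  · push_neg at hd
    obtain ⟨i, hi, j, hj, hij, hne⟩ := hd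
    have key : ∀ i j, i < j → j < r → v i = v j → HasDCycle D := by
      intro i j hlt hjr heq
      refine ih (j - i) (by omega) (by omega) (fun k => v (i + k)) ?_ ?_
      · show v (i + (j - i)) = v (i + 0)
        rw [(by omega : i + (j - i) = j), (by omega : i + 0 = i), heq]
      · intro k hk
        show (v (i + k), v (i + (k + 1))) ∈ D
        rw [(by omega : i + (k + 1) = i + k + 1)]
        exact harc (i + k) (by omega)
    rcases Nat.lt_or_ge i j with hlt | hge
    · exact key i j hlt hj hij
    · exact key j i (by omega) hi hij.symm

lemma dreach_antisymm (hda : DAcyclic D) {a b : Fin n}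
    (hab : dreach D a b) (hba : dreach D b a) : a = b := by
  by_contra hne
  obtain ⟨m, v, hv0, hvm, hvarc⟩ := walk_of_dreach hab
  obtain ⟨p, u, hu0, hup, huarc⟩ := walk_of_dreach hba
  have hm : 1 ≤ m := by
    rcases Nat.eq_zero_or_pos m with h | h
    · subst h; exact absurd (hv0 ▸ hvm : a = b) hne
    · exact h
  have hp : 1 ≤ p := by
    rcases Nat.eq_zero_or_pos p with h | h
    · subst h; exact absurd (hu0 ▸ hup : b = a) (Ne.symm hne)
    · exact h
  apply hda
  set w : ℕ → Fin n := fun k => if k ≤ m then v k else u (k - m) with hw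
  have hwlate : ∀ i, m ≤ i → w i = u (i - m) := by
    intro i hmi
    rcases Nat.eq_or_lt_of_le hmi with h | h
    · subst h; simp [hw, hvm, ← hu0]
    · simp [hw, if_neg (by omega : ¬ i ≤ m)]
  refine cycle_of_closed (m + p) (by omega) w ?_ ?_
  · rw [hwlate (m + p) (by omega), (by omega : m + p - m = p), hup]
    simp [hw, hv0]
  · intro i hi
    rcases Nat.lt_or_ge i m with h | h
    · simp only [hw, if_pos (by omega : i ≤ m), if_pos (by omega : i + 1 ≤ m)]
      exact hvarc i h
    · rw [hwlate i h, hwlate (i + 1) (by omega), (by omega : i + 1 - m = (i - m) + 1)]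
      exact huarc (i - m) (by omega)

/-- `α` is extensive and monotone w.r.t. reachability. -/
def GoodT (D : Set (Fin n × Fin n)) (α : Fin n → Fin n) : Prop :=
  (∀ x, dreach D x (α x)) ∧ ∀ x y, dreach D x y → dreach D (α x) (α y)

lemma goodT_id : GoodT D id := ⟨fun _ => .refl, fun _ _ h => h⟩

lemma goodT_comp {f g : Fin n → Fin n} (hf : GoodT D f) (hg : GoodT D g) :
    GoodT D (g ∘ f) :=
  ⟨fun x => (hf.1 x).trans (hg.1 (f x)), fun x y h => hg.2 _ _ (hf.2 _ _ h)⟩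

lemma goodT_arc (hout : ∀ a : Fin n, { b : Fin n | (a, b) ∈ D }.Subsingleton)
    {a b : Fin n} (hab : (a, b) ∈ D) : GoodT D (arcT a b) := by
  constructor
  · intro x
    by_cases hx : x = a
    · subst hx
      simp only [arcT, if_pos rfl]
      exact Relation.ReflTransGen.single hab
    · simp only [arcT, if_neg hx]
      exact Relation.ReflTransGen.refl
  · intro x y h
    by_cases hx : x = a <;> by_cases hy : y = a
    · subst hx; subst hy; exact .refl
    · subst hx
      rcases Relation.ReflTransGen.cases_head h with heq | ⟨c, hac, hcy⟩
      · exact absurd heq.symm hy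
      · have hcb : c = b := hout _ hac hab
        subst hcb
        simp only [arcT, if_pos rfl, if_neg hy]
        exact hcy
    · subst hy
      simp only [arcT, if_neg hx, if_pos rfl]
      exact h.tail hab
    · simp only [arcT, if_neg hx, if_neg hy]
      exact h

lemma goodT_fold (hout : ∀ a : Fin n, { b : Fin n | (a, b) ∈ D }.Subsingleton) :
    ∀ l : List (Fin n × Fin n), (∀ p ∈ l, p ∈ D) → ∀ g, GoodT D g →
      GoodT D (l.foldl (fun f p => arcT p.1 p.2 ∘ f) g) := by
  intro l
  induction l with
  | nil => intro _ g hg; exact hg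
  | cons p l ih =>
    intro hl g hg
    simp only [List.foldl_cons]
    exact ih (fun q hq => hl q (List.mem_cons_of_mem p hq))
      _ (goodT_comp hg (goodT_arc hout (hl p List.mem_cons_self)))

lemma goodT_mem (hout : ∀ a : Fin n, { b : Fin n | (a, b) ∈ D }.Subsingleton)
    {α : Fin n → Fin n} (hα : α ∈ genSg D) : GoodT D α := by
  obtain ⟨l, _, hl, rfl⟩ := hα
  exact goodT_fold hout l hl id goodT_id

lemma jtrivial_of (hac : DAcyclic D)
    (hout : ∀ a : Fin n, { b : Fin n | (a, b) ∈ D }.Subsingleton) :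
    JTrivial (genSg D) := by
  intro x hx y hy hxy
  have hgood : ∀ z ∈ insert id (genSg D), GoodT D z := by
    rintro z (rfl | hz)
    · exact goodT_id
    · exact goodT_mem hout hz
  have hxin : x ∈ jIdeal (genSg D) y := by
    rw [← hxy]; exact mem_jIdeal_self x
  have hyin : y ∈ jIdeal (genSg D) x := by
    rw [hxy]; exact mem_jIdeal_self y
  obtain ⟨s, hs, t, ht, hxe⟩ := hxin
  obtain ⟨s', hs', t', ht', hye⟩ := hyin
  funext v
  have h1 : dreach D (y v) (x v) := by
    have : x v = t (y (s v)) := by rw [hxe]; rfl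
    rw [this]
    exact ((goodT_mem hout hy).2 _ _ ((hgood s hs).1 v)).trans ((hgood t ht).1 _)
  have h2 : dreach D (x v) (y v) := by
    have : y v = t' (x (s' v)) := by rw [hye]; rfl
    rw [this]
    exact ((goodT_mem hout hx).2 _ _ ((hgood s' hs').1 v)).trans ((hgood t' ht').1 _)
  exact dreach_antisymm hac h2 h1

end order

section one_to_three
variable {n : ℕ} {D : Set (Fin n × Fin n)}

lemma acyclic_of_h1 (hloop : ∀ u : Fin n, (u, u) ∉ D)
    (h1 : ∀ x ∈ genSg D, ∀ y ∈ genSg D, sgMul x x = x → sgMul y y = y →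
      (LRel (genSg D) x y ∨ RRel (genSg D) x y) → x = y) :
    DAcyclic D := by
  have hcl : ∀ a ∈ genSg D, ∀ b ∈ genSg D, sgMul a b ∈ genSg D :=
    fun a ha b hb => genSg_mul ha hb
  rintro ⟨r, v, hr, hc, hdist, harc⟩
  have hr2 : 2 ≤ r := by
    rcases Nat.lt_or_ge r 2 with h | h
    · have hr1 : r = 1 := by omega
      subst hr1
      exact absurd (hc ▸ harc 0 (by omega) : (v 0, v 0) ∈ D) (hloop (v 0))
    · exact h
  have hr0 : 0 < r := by omega
  set v' : ℕ → Fin n := fun k => v (k % r) with hv'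
  have hper : ∀ j k : ℕ, j % r = k % r → v' j = v' k := by
    intro j k h; simp only [hv', h]
  have hinj : ∀ j k : ℕ, v' j = v' k → j % r = k % r := by
    intro j k h
    exact hdist (j % r) (Nat.mod_lt _ hr0) (k % r) (Nat.mod_lt _ hr0) h
  have harc' : ∀ k, (v' k, v' (k + 1)) ∈ D := by
    intro k
    have h1k : k % r < r := Nat.mod_lt _ hr0
    have h2 : v' (k + 1) = v (k % r + 1) := by
      show v ((k + 1) % r) = v (k % r + 1)
      have h1r : 1 % r = 1 := Nat.mod_eq_of_lt (by omega)
      rcases Nat.lt_or_ge (k % r + 1) r with h | h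
      · rw [Nat.add_mod, h1r, Nat.mod_eq_of_lt h]
      · have hkr : k % r + 1 = r := by omega
        rw [Nat.add_mod, h1r, hkr, Nat.mod_self]
        exact hc.symm
    rw [h2]
    exact harc (k % r) h1k
  -- the partial cycle products
  set Q : ℕ → ℕ → (Fin n → Fin n) := fun s m =>
    ((List.range m).map fun k => (v' (s + k), v' (s + k + 1))).foldl
      (fun f p => arcT p.1 p.2 ∘ f) id with hQ
  have hQ0 : ∀ s, Q s 0 = id := fun s => rfl
  have hQsucc : ∀ s m, Q s (m + 1) = arcT (v' (s + m)) (v' (s + m + 1)) ∘ Q s m := by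
    intro s m
    simp only [hQ, List.range_succ, List.map_append, List.foldl_append, List.map_cons,
      List.map_nil, List.foldl_cons, List.foldl_nil]
  have hQmem : ∀ s m, 1 ≤ m → Q s m ∈ genSg D := by
    intro s m hm
    refine ⟨_, ?_, ?_, rfl⟩
    · simp only [ne_eq, List.map_eq_nil_iff, List.range_eq_nil]
      omega
    · intro p hp
      obtain ⟨k, _, rfl⟩ := List.mem_map.1 hp
      exact harc' (s + k)
  have hQfix : ∀ s m x, (∀ j, x ≠ v' j) → Q s m x = x := by
    intro s m x hx
    induction m with
    | zero => rfl
    | succ m ih =>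
      rw [hQsucc]
      show arcT (v' (s + m)) (v' (s + m + 1)) (Q s m x) = x
      rw [ih]
      exact if_neg (hx (s + m))
  have hQcyc : ∀ s t m, t < r → Q s m (v' (s + t)) = v' (s + max t m) := by
    intro s t m ht
    induction m with
    | zero => rw [hQ0]; simp
    | succ m ih =>
      rw [hQsucc]
      show arcT (v' (s + m)) (v' (s + m + 1)) (Q s m (v' (s + t))) = _
      rw [ih]
      rcases Nat.lt_or_ge m t with h | h
      · rw [Nat.max_eq_left h.le, Nat.max_eq_left (by omega : m + 1 ≤ t)]
        refine if_neg ?_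
        intro heq
        have := hinj _ _ heq
        have h2 : t % r = m % r := Nat.ModEq.add_left_cancel' s this
        rw [Nat.mod_eq_of_lt ht, Nat.mod_eq_of_lt (by omega : m < r)] at h2
        omega
      · rw [Nat.max_eq_right h, Nat.max_eq_right (by omega : t ≤ m + 1)]
        exact if_pos rfl
  have hex : ∀ s j : ℕ, ∃ t, t < r ∧ (s + t) % r = j % r := by
    intro s j
    refine ⟨(j + r - s % r) % r, Nat.mod_lt _ hr0, ?_⟩
    have hsl : s % r < r := Nat.mod_lt _ hr0
    obtain ⟨q, hq⟩ : ∃ q, s = r * q + s % r := ⟨s / r, (Nat.div_add_mod s r).symm⟩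
    calc (s + (j + r - s % r) % r) % r
        = (s + (j + r - s % r)) % r := by
          rw [Nat.add_mod, Nat.mod_mod_of_dvd _ dvd_rfl, ← Nat.add_mod]
      _ = (j + r * q + r) % r := by
          congr 1
          omega
      _ = j % r := by
          rw [Nat.add_mod_right, Nat.add_mul_mod_self_left]
  have hπmap : ∀ s j : ℕ, Q s r (v' j) = v' s := by
    intro s j
    obtain ⟨t, ht, hmod⟩ := hex s j
    rw [hper j (s + t) hmod.symm, hQcyc s t r ht, Nat.max_eq_right ht.le]
    exact hper _ _ (by rw [Nat.add_mod_right])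
  have hidem : ∀ s, sgMul (Q s r) (Q s r) = Q s r := by
    intro s
    funext x
    show Q s r (Q s r x) = Q s r x
    by_cases hx : ∃ j, x = v' j
    · obtain ⟨j, rfl⟩ := hx
      rw [hπmap s j, hπmap s s]
    · push_neg at hx
      rw [hQfix s r x hx, hQfix s r x hx]
  have hπ01 : Q 1 r = sgMul (Q 0 r) (Q 0 1) := by
    funext x
    show Q 1 r x = Q 0 1 (Q 0 r x)
    by_cases hx : ∃ j, x = v' j
    · obtain ⟨j, rfl⟩ := hx
      rw [hπmap 1 j, hπmap 0 j]
      show v' 1 = arcT (v' (0 + 0)) (v' (0 + 0 + 1)) (Q 0 0 (v' 0))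
      rw [hQ0]
      exact (if_pos rfl).symm
    · push_neg at hx
      rw [hQfix 1 r x hx, hQfix 0 r x hx, hQfix 0 1 x hx]
  have hπ10 : Q 0 r = sgMul (Q 1 r) (Q 1 (r - 1)) := by
    funext x
    show Q 0 r x = Q 1 (r - 1) (Q 1 r x)
    by_cases hx : ∃ j, x = v' j
    · obtain ⟨j, rfl⟩ := hx
      rw [hπmap 0 j, hπmap 1 j]
      have h0 : Q 1 (r - 1) (v' (1 + 0)) = v' (1 + max 0 (r - 1)) := hQcyc 1 0 (r - 1) hr0
      rw [(by norm_num : (1 : ℕ) + 0 = 1)] at h0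
      rw [h0, Nat.max_eq_right (Nat.zero_le _)]
      exact (hper _ _ (by rw [(by omega : 1 + (r - 1) = r), Nat.mod_self, Nat.zero_mod])).symm
    · push_neg at hx
      rw [hQfix 0 r x hx, hQfix 1 r x hx, hQfix 1 (r - 1) x hx]
  have hRR : RRel (genSg D) (Q 0 r) (Q 1 r) :=
    Set.Subset.antisymm
      (rIdeal_sub hcl (hQmem 1 (r - 1) (by omega)) hπ10)
      (rIdeal_sub hcl (hQmem 0 1 (by omega)) hπ01)
  have heq := h1 (Q 0 r) (hQmem 0 r (by omega)) (Q 1 r) (hQmem 1 r (by omega))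
    (hidem 0) (hidem 1) (Or.inr hRR)
  have := congrFun heq (v' 0)
  rw [hπmap 0 0, hπmap 1 0] at this
  have h01 := hinj 0 1 this
  rw [Nat.zero_mod, Nat.mod_eq_of_lt (by omega : 1 < r)] at h01
  omega

end one_to_three

section outdeg
variable {n : ℕ} {D : Set (Fin n × Fin n)}

lemma outdeg_of_h1 (hloop : ∀ u : Fin n, (u, u) ∉ D)
    (h1 : ∀ x ∈ genSg D, ∀ y ∈ genSg D, sgMul x x = x → sgMul y y = y →
      (LRel (genSg D) x y ∨ RRel (genSg D) x y) → x = y) :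
    ∀ a : Fin n, { b : Fin n | (a, b) ∈ D }.Subsingleton := by
  have hcl : ∀ a ∈ genSg D, ∀ b ∈ genSg D, sgMul a b ∈ genSg D :=
    fun a ha b hb => genSg_mul ha hb
  intro a b hb c hc
  by_contra hbc
  have hba : b ≠ a := fun h => hloop a (h ▸ hb)
  have hca : c ≠ a := fun h => hloop a (h ▸ hc)
  have hmem : ∀ d : Fin n, (a, d) ∈ D → arcT a d ∈ genSg D := by
    intro d hd
    exact ⟨[(a, d)], by simp, by simpa using hd, by funext x; rfl⟩
  have hidem : ∀ d : Fin n, sgMul (arcT a d) (arcT a d) = arcT a d := by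
    intro d
    funext x
    show arcT a d (arcT a d x) = arcT a d x
    unfold arcT
    split_ifs with h1' h2' <;> simp_all
  have habc : sgMul (arcT a b) (arcT a c) = arcT a b := by
    funext x
    show arcT a c (arcT a b x) = arcT a b x
    unfold arcT
    split_ifs with h1' h2' <;> simp_all
  have hacb : sgMul (arcT a c) (arcT a b) = arcT a c := by
    funext x
    show arcT a b (arcT a c x) = arcT a c x
    unfold arcT
    split_ifs with h1' h2' <;> simp_all
  have hL : LRel (genSg D) (arcT a b) (arcT a c) :=
    Set.Subset.antisymm
      (lIdeal_sub hcl (hmem b hb) habc.symm)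
      (lIdeal_sub hcl (hmem c hc) hacb.symm)
  have heq := h1 (arcT a b) (hmem b hb) (arcT a c) (hmem c hc)
    (hidem b) (hidem c) (Or.inl hL)
  have := congrFun heq a
  simp only [arcT, if_pos rfl] at this
  exact hbc this

end outdeg

/-- The following are equivalent: every `L`-class and every `R`-class
of `⟨D⟩` contains at most one idempotent; `⟨D⟩` is `J`-trivial; `D` is acyclic with all
out-degrees at most one. -/
theorem stmt13 (n : ℕ) (D : Set (Fin n × Fin n)) (hloop : ∀ u : Fin n, (u, u) ∉ D)
    (hne : D.Nonempty) :
    List.TFAE [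
      ∀ x ∈ genSg D, ∀ y ∈ genSg D, sgMul x x = x → sgMul y y = y →
        (LRel (genSg D) x y ∨ RRel (genSg D) x y) → x = y,
      JTrivial (genSg D),
      DAcyclic D ∧ ∀ a : Fin n, { b : Fin n | (a, b) ∈ D }.Subsingleton] := by
  have hcl : ∀ a ∈ genSg D, ∀ b ∈ genSg D, sgMul a b ∈ genSg D :=
    fun a ha b hb => genSg_mul ha hb
  tfae_have 1 → 3 := by
    intro h1
    exact ⟨acyclic_of_h1 hloop h1, outdeg_of_h1 hloop h1⟩
  tfae_have 3 → 2 := by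
    rintro ⟨hac, hout⟩
    exact jtrivial_of hac hout
  tfae_have 2 → 1 := by
    intro h2 x hx y hy _ _ hLR
    apply h2 x hx y hy
    rcases hLR with hL | hR
    · exact lrel_jrel hcl hL
    · exact rrel_jrel hcl hR
  tfae_finish
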